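/- A nonabelian CSA-group contains no nonabelian solvable subgroup. -/

import Mathlib

/-- A maximal abelian subgroup: abelian and maximal among abelian subgroups. -/
def IsMaximalAbelian {G : Type*} [Group G] (M : Subgroup G) : Prop :=
  IsMulCommutative M ∧ ∀ N : Subgroup G, IsMulCommutative N → M ≤ N → N = M

/-- A subgroup `H` is malnormal (conjugately separated): `H ∩ H^x = 1` for `x ∉ H`. -/
def IsMalnormal {G : Type*} [Group G] (H : Subgroup G) : Prop :=
  ∀ x : G, x ∉ H → ∀ g ∈ H, x⁻¹ * g * x ∈ H → g = 1

/-- A CSA-group: all maximal abelian subgroups are malnormal. -/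
def IsCSA (G : Type*) [Group G] : Prop :=
  ∀ M : Subgroup G, IsMaximalAbelian M → IsMalnormal M

/-- Commutation is transitive on nontrivial elements. -/
def CommTrans (G : Type*) [Group G] : Prop :=
  ∀ a b c : G, a ≠ 1 → b ≠ 1 → c ≠ 1 → Commute a b → Commute b c → Commute a c
section Aux

open scoped commutatorElement

variable {G : Type*} [Group G]

lemma isCommutative_of_le {K M : Subgroup G} (hM : IsMulCommutative M) (h : K ≤ M) :
    IsMulCommutative K := by
  haveI := hM
  exact ⟨⟨fun a b => Subtype.ext
    (Subgroup.mul_comm_of_mem_isMulCommutative M (h a.2) (h b.2))⟩⟩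

lemma exists_maximalAbelian_ge (A : Subgroup G) (hA : IsMulCommutative A) :
    ∃ M : Subgroup G, A ≤ M ∧ IsMaximalAbelian M := by
  obtain ⟨M, hAM, hMs, hMmax⟩ := zorn_le_nonempty₀ {N : Subgroup G | IsMulCommutative N}
    (fun c hcs hchain y hy => by
      refine ⟨sSup c, ?_, fun z hz => le_sSup hz⟩
      have hdir : DirectedOn (· ≤ ·) c := hchain.directedOn
      refine ⟨⟨fun a b => ?_⟩⟩
      obtain ⟨Na, hNa, ha⟩ := (Subgroup.mem_sSup_of_directedOn ⟨y, hy⟩ hdir).mp a.2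
      obtain ⟨Nb, hNb, hb⟩ := (Subgroup.mem_sSup_of_directedOn ⟨y, hy⟩ hdir).mp b.2
      rcases hchain.total hNa hNb with hle | hle
      · haveI : IsMulCommutative Nb := hcs hNb
        exact Subtype.ext (Subgroup.mul_comm_of_mem_isMulCommutative Nb (hle ha) hb)
      · haveI : IsMulCommutative Na := hcs hNa
        exact Subtype.ext (Subgroup.mul_comm_of_mem_isMulCommutative Na ha (hle hb))) A hA
  exact ⟨M, hAM, hMs, fun N hN hMN => le_antisymm (hMmax hN hMN) hMN⟩

lemma map_derivedSeries_shift (H : Subgroup G)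
    (D : Subgroup G) (hD : D = (derivedSeries ↥H 1).map H.subtype) (n : ℕ) :
    (derivedSeries ↥D n).map D.subtype = (derivedSeries ↥H (n + 1)).map H.subtype := by
  induction n with
  | zero =>
    rw [derivedSeries_zero, ← MonoidHom.range_eq_map, Subgroup.subtype_range, hD]
  | succ n ih =>
    rw [derivedSeries_succ, Subgroup.map_commutator, ih, derivedSeries_succ (↥H) (n + 1),
      Subgroup.map_commutator]

lemma key_lemma (hG : IsCSA G) : ∀ n : ℕ, ∀ H : Subgroup G,
    derivedSeries ↥H n = ⊥ → IsMulCommutative H := by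
  intro n
  induction n with
  | zero =>
    intro H h
    refine ⟨⟨fun a b => ?_⟩⟩
    have ha : a ∈ (⊥ : Subgroup ↥H) := h ▸ Subgroup.mem_top a
    have hb : b ∈ (⊥ : Subgroup ↥H) := h ▸ Subgroup.mem_top b
    rw [Subgroup.mem_bot] at ha hb
    rw [ha, hb]
  | succ n ih =>
    intro H h
    set D : Subgroup G := (derivedSeries ↥H 1).map H.subtype with hDdef
    have hDn : derivedSeries ↥D n = ⊥ := by
      have := map_derivedSeries_shift H D hDdef n
      rw [h, Subgroup.map_bot] at this
      exact (Subgroup.map_eq_bot_iff_of_injective _ (Subgroup.subtype_injective D)).mp this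
    have hDcomm : IsMulCommutative D := ih D hDn
    by_cases hbot : D = ⊥
    · -- commutator of H trivial, so H commutative
      refine ⟨⟨fun a b => ?_⟩⟩
      have : ⁅a, b⁆ ∈ derivedSeries ↥H 1 := by
        rw [derivedSeries_succ, derivedSeries_zero]
        exact Subgroup.commutator_mem_commutator (Subgroup.mem_top a) (Subgroup.mem_top b)
      have h1 : derivedSeries ↥H 1 = ⊥ :=
        (Subgroup.map_eq_bot_iff_of_injective _ (Subgroup.subtype_injective H)).mp hbot
      rw [h1, Subgroup.mem_bot] at this
      exact commutatorElement_eq_one_iff_mul_comm.mp this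
    · obtain ⟨M, hDM, hMcomm, hMmax⟩ := exists_maximalAbelian_ge D hDcomm
      have hMal : IsMalnormal M := hG M ⟨hMcomm, hMmax⟩
      obtain ⟨a, ha1⟩ := Subgroup.ne_bot_iff_exists_ne_one.mp hbot
      have hane : (a : G) ≠ 1 := fun hc => ha1 (Subtype.ext hc)
      -- H ≤ M
      have hHM : H ≤ M := by
        intro x hxH
        by_contra hxM
        -- conjugate of a by x stays in D
        obtain ⟨a₀, ha₀, ha₀eq⟩ := a.2
        have hnorm : (derivedSeries ↥H 1).Normal := derivedSeries_normal ↥H 1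
        have hconj : (⟨x, hxH⟩ : ↥H)⁻¹ * a₀ * ⟨x, hxH⟩ ∈ derivedSeries ↥H 1 := by
          have := hnorm.conj_mem a₀ ha₀ (⟨x, hxH⟩ : ↥H)⁻¹
          simpa using this
        have hconjD : x⁻¹ * (a : G) * x ∈ D := by
          refine ⟨_, hconj, ?_⟩
          simpa using ha₀eq
        exact hane (hMal x hxM (a : G) (hDM a.2) (hDM hconjD))
      exact isCommutative_of_le hMcomm hHM

end Aux

theorem stmt_10 {G : Type*} [Group G] (hna : ¬∀ a b : G, a * b = b * a)
    (hG : IsCSA G) (H : Subgroup G) (hsolv : IsSolvable H) :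
    IsMulCommutative H := by
  obtain ⟨n, hn⟩ := hsolv.solvable
  exact key_lemma hG n H hn
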